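/- Let P > 0 be fixed, 0 < ε < 1, and B(N) = ⌈N^ε⌉. Let G_N = (1/N)∑_{r=0}^{N-1}|H_r|² where H_r are i.i.d. standard complex Gaussian. Then B(N)·E[log(1 + P·N·G_N/B(N))] = Θ(N^ε · log N), i.e., there exist constants c₁, c₂ > 0 and N₀ such that for N > N₀, c₁ ≤ B(N)·E[log(1 + P·N·G_N/B(N))]/(N^ε log N) ≤ c₂. -/

import Mathlib

open Filter MeasureTheory ProbabilityTheory Set
open scoped ENNReal NNReal

/-- The Exponential(1) distribution on `ℝ`. -/
noncomputable def expOneMeasure : Measure ℝ :=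
  volume.withDensity fun x => ENNReal.ofReal (if 0 ≤ x then Real.exp (-x) else 0)


lemma expOne_density_meas : Measurable (fun x : ℝ => if 0 ≤ x then Real.exp (-x) else 0) :=
  Measurable.ite measurableSet_Ici (Real.measurable_exp.comp measurable_neg) measurable_const

lemma integral_expOne (f : ℝ → ℝ) :
    ∫ x, f x ∂expOneMeasure = ∫ x in Ici (0:ℝ), Real.exp (-x) * f x := by
  have hm : Measurable (fun x : ℝ => (if 0 ≤ x then Real.exp (-x) else 0).toNNReal) :=
    expOne_density_meas.real_toNNReal
  have : expOneMeasure
      = volume.withDensity (fun x => ((if 0 ≤ x then Real.exp (-x) else 0).toNNReal : ℝ≥0∞)) :=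
    rfl
  rw [this, integral_withDensity_eq_integral_smul hm f, ← integral_indicator measurableSet_Ici]
  congr 1
  funext x
  by_cases h : 0 ≤ x <;>
    simp [Set.indicator, h, NNReal.smul_def, Real.coe_toNNReal _ (Real.exp_nonneg _)]

lemma integrable_expOne_iff (f : ℝ → ℝ) :
    Integrable f expOneMeasure ↔ IntegrableOn (fun x => f x * Real.exp (-x)) (Ici (0:ℝ)) := by
  rw [expOneMeasure, integrable_withDensity_iff expOne_density_meas.ennreal_ofReal
    (Filter.Eventually.of_forall fun x => ENNReal.ofReal_lt_top)]
  rw [← integrable_indicator_iff measurableSet_Ici]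
  constructor <;> intro h <;> refine h.congr ?_ <;> refine Filter.Eventually.of_forall fun x => ?_ <;>
    by_cases hx : 0 ≤ x <;>
    simp [Set.indicator, hx, ENNReal.toReal_ofReal, Real.exp_nonneg]

lemma integrableOn_x_exp : IntegrableOn (fun x : ℝ => x * Real.exp (-x)) (Ici (0:ℝ)) := by
  rw [integrableOn_Ici_iff_integrableOn_Ioi]
  have := Real.GammaIntegral_convergent (s := 2) (by norm_num)
  refine this.congr_fun (fun x hx => ?_) measurableSet_Ioi
  dsimp only
  rw [show (2:ℝ) - 1 = 1 by norm_num, Real.rpow_one, mul_comm]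

lemma integrable_id_expOne : Integrable (fun x : ℝ => x) expOneMeasure :=
  (integrable_expOne_iff _).2 integrableOn_x_exp

lemma integral_id_expOne : ∫ x, x ∂expOneMeasure = 1 := by
  rw [integral_expOne, integral_Ici_eq_integral_Ioi]
  have h2 : ∫ x in Ioi (0:ℝ), Real.exp (-x) * x
      = ∫ x in Ioi (0:ℝ), Real.exp (-x) * x ^ ((2:ℝ) - 1) := by
    refine setIntegral_congr_fun measurableSet_Ioi fun x hx => ?_
    rw [show (2:ℝ) - 1 = 1 by norm_num, Real.rpow_one]
  rw [h2, ← Real.Gamma_eq_integral (by norm_num : (0:ℝ) < 2), Real.Gamma_two]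

lemma integrableOn_exp_log (c : ℝ) (hc : 0 ≤ c) :
    IntegrableOn (fun x => Real.exp (-x) * Real.log (1 + c * x)) (Ici (0:ℝ)) := by
  refine Integrable.mono' (integrableOn_x_exp.const_mul c) ?_ ?_
  · exact ((Real.measurable_exp.comp measurable_neg).mul
      (Real.measurable_log.comp ((measurable_id.const_mul c).const_add 1))).aestronglyMeasurable
  · rw [ae_restrict_iff' measurableSet_Ici]
    refine Filter.Eventually.of_forall fun x hx => ?_
    have hx0 : (0:ℝ) ≤ x := hx
    have h1 : (0:ℝ) < 1 + c * x := by nlinarith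
    have hlog0 : 0 ≤ Real.log (1 + c * x) := Real.log_nonneg (by nlinarith)
    have hlog : Real.log (1 + c * x) ≤ c * x := by
      have := Real.log_le_sub_one_of_pos h1
      linarith
    rw [Real.norm_eq_abs, abs_of_nonneg (mul_nonneg (Real.exp_pos _).le hlog0)]
    calc Real.exp (-x) * Real.log (1 + c * x) ≤ Real.exp (-x) * (c * x) :=
          mul_le_mul_of_nonneg_left hlog (Real.exp_pos _).le
      _ = c * (x * Real.exp (-x)) := by ring

lemma integrable_log_expOne (c : ℝ) (hc : 0 ≤ c) :
    Integrable (fun x => Real.log (1 + c * x)) expOneMeasure := by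
  refine (integrable_expOne_iff _).2 ?_
  exact (integrableOn_exp_log c hc).congr_fun (fun x _ => mul_comm _ _) measurableSet_Ici

lemma integrableOn_exp_Ici (a : ℝ) : IntegrableOn (fun x : ℝ => Real.exp (-x)) (Ici a) := by
  rw [integrableOn_Ici_iff_integrableOn_Ioi]
  exact (exp_neg_integrableOn_Ioi a one_pos).congr_fun (fun x _ => by norm_num) measurableSet_Ioi

lemma expOne_log_lb (c : ℝ) (hc : 0 ≤ c) :
    Real.exp (-1) * Real.log (1 + c) ≤ ∫ x, Real.log (1 + c * x) ∂expOneMeasure := by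
  rw [integral_expOne]
  have hInt0 := integrableOn_exp_log c hc
  have hInt1 : IntegrableOn (fun x => Real.exp (-x) * Real.log (1 + c * x)) (Ici (1:ℝ)) :=
    hInt0.mono_set (Ici_subset_Ici.2 zero_le_one)
  have step1 : ∫ x in Ici (1:ℝ), Real.exp (-x) * Real.log (1 + c * x)
      ≤ ∫ x in Ici (0:ℝ), Real.exp (-x) * Real.log (1 + c * x) := by
    refine setIntegral_mono_set hInt0 ?_
      ((Ici_subset_Ici.2 zero_le_one).eventuallyLE)
    filter_upwards [ae_restrict_mem measurableSet_Ici] with x hx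
    have hx0 : (0:ℝ) ≤ x := hx
    exact mul_nonneg (Real.exp_pos _).le (Real.log_nonneg (by nlinarith))
  have step2 : ∫ x in Ici (1:ℝ), Real.exp (-x) * Real.log (1 + c)
      ≤ ∫ x in Ici (1:ℝ), Real.exp (-x) * Real.log (1 + c * x) := by
    refine setIntegral_mono_on ((integrableOn_exp_Ici 1).mul_const _) hInt1
      measurableSet_Ici fun x hx => ?_
    have hx1 : (1:ℝ) ≤ x := hx
    refine mul_le_mul_of_nonneg_left ?_ (Real.exp_pos _).le
    exact Real.log_le_log (by linarith) (by nlinarith)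
  have step3 : ∫ x in Ici (1:ℝ), Real.exp (-x) * Real.log (1 + c)
      = Real.exp (-1) * Real.log (1 + c) := by
    rw [integral_mul_const, integral_Ici_eq_integral_Ioi, integral_exp_neg_Ioi]
  linarith

lemma main_est {Ω : Type*} [MeasureSpace Ω] [IsProbabilityMeasure (ℙ : Measure Ω)]
    (X : ℕ → Ω → ℝ) (hmeas : ∀ r, Measurable (X r)) (hnonneg : ∀ r ω, 0 ≤ X r ω)
    (hdist : ∀ r, Measure.map (X r) ℙ = expOneMeasure)
    (N : ℕ) (hN : 1 ≤ N) (c : ℝ) (hc : 0 ≤ c) :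
    Real.exp (-1) * Real.log (1 + c)
      ≤ ∫ ω, Real.log (1 + c * ((∑ r ∈ Finset.range N, X r ω) / N)) ∂(ℙ : Measure Ω) ∧
    ∫ ω, Real.log (1 + c * ((∑ r ∈ Finset.range N, X r ω) / N)) ∂(ℙ : Measure Ω)
      ≤ Real.log (1 + c) := by
  have hNR : (0:ℝ) < N := by exact_mod_cast hN
  set S : Ω → ℝ := fun ω => (∑ r ∈ Finset.range N, X r ω) / N with hS
  have hSmeas : Measurable S :=
    (Finset.measurable_sum _ fun r _ => hmeas r).div_const _
  have hSnonneg : ∀ ω, 0 ≤ S ω := fun ω =>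
    div_nonneg (Finset.sum_nonneg fun r _ => hnonneg r ω) hNR.le
  have hXint : ∀ r, Integrable (X r) ℙ := by
    intro r
    have h := integrable_map_measure (μ := (ℙ : Measure Ω)) (f := X r) (g := fun x : ℝ => x)
      aestronglyMeasurable_id (hmeas r).aemeasurable
    rw [hdist r] at h
    exact h.mp integrable_id_expOne
  have hXmean : ∀ r, ∫ ω, X r ω ∂(ℙ : Measure Ω) = 1 := by
    intro r
    have h := integral_map (μ := (ℙ : Measure Ω)) (φ := X r) (f := fun x : ℝ => x)
      (hmeas r).aemeasurable aestronglyMeasurable_id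
    rw [hdist r, integral_id_expOne] at h
    exact h.symm
  have hSint : Integrable S ℙ :=
    (integrable_finset_sum _ fun r _ => hXint r).div_const _
  have hSmean : ∫ ω, S ω ∂(ℙ : Measure Ω) = 1 := by
    rw [hS]
    simp only [integral_div, integral_finset_sum _ fun r (_ : r ∈ Finset.range N) => hXint r]
    simp [hXmean, div_self hNR.ne']
  have hlogc0 : 0 ≤ Real.log (1 + c) := Real.log_nonneg (by linarith)
  have h1S : ∀ ω, (0:ℝ) < 1 + c * S ω := fun ω => by nlinarith [hSnonneg ω, mul_nonneg hc (hSnonneg ω)]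
  have hlogSmeas : AEStronglyMeasurable (fun ω => Real.log (1 + c * S ω)) ℙ :=
    (Real.measurable_log.comp ((hSmeas.const_mul c).const_add 1)).aestronglyMeasurable
  have hlogSint : Integrable (fun ω => Real.log (1 + c * S ω)) ℙ := by
    refine Integrable.mono' (hSint.const_mul c) hlogSmeas ?_
    refine Filter.Eventually.of_forall fun ω => ?_
    have h0 : 0 ≤ Real.log (1 + c * S ω) :=
      Real.log_nonneg (by nlinarith [mul_nonneg hc (hSnonneg ω)])
    rw [Real.norm_eq_abs, abs_of_nonneg h0]
    have := Real.log_le_sub_one_of_pos (h1S ω)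
    linarith
  have hlogXint : ∀ r, Integrable (fun ω => Real.log (1 + c * X r ω)) ℙ := by
    intro r
    have h := integrable_map_measure (μ := (ℙ : Measure Ω)) (f := X r) (g := fun x : ℝ => Real.log (1 + c * x))
      (Real.measurable_log.comp ((measurable_id.const_mul c).const_add 1)).aestronglyMeasurable
      (hmeas r).aemeasurable
    rw [hdist r] at h
    exact h.mp (integrable_log_expOne c hc)
  have hlogXval : ∀ r, ∫ ω, Real.log (1 + c * X r ω) ∂(ℙ : Measure Ω)
      = ∫ x, Real.log (1 + c * x) ∂expOneMeasure := by
    intro r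
    have h := integral_map (μ := (ℙ : Measure Ω)) (φ := X r) (f := fun x : ℝ => Real.log (1 + c * x))
      (hmeas r).aemeasurable
      (Real.measurable_log.comp ((measurable_id.const_mul c).const_add 1)).aestronglyMeasurable
    rw [hdist r] at h
    exact h.symm
  constructor
  · -- lower bound via Jensen
    have hjensen : ∀ ω, ∑ r ∈ Finset.range N, ((N:ℝ)⁻¹ • Real.log (1 + c * X r ω))
        ≤ Real.log (1 + c * S ω) := by
      intro ω
      have key := (strictConcaveOn_log_Ioi.concaveOn).le_map_sum
        (t := Finset.range N) (w := fun _ => (N:ℝ)⁻¹) (p := fun r => 1 + c * X r ω)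
        (fun i _ => by positivity)
        (by simp [Finset.sum_const, Finset.card_range]; field_simp)
        (fun i _ => by simp only [Set.mem_Ioi]; nlinarith [mul_nonneg hc (hnonneg i ω)])
      have harg : ∑ r ∈ Finset.range N, (N:ℝ)⁻¹ • (1 + c * X r ω) = 1 + c * S ω := by
        simp only [smul_eq_mul]
        rw [Finset.sum_congr rfl
          (show ∀ r ∈ Finset.range N,
            (N:ℝ)⁻¹ * (1 + c * X r ω) = (N:ℝ)⁻¹ + (c / N) * X r ω from fun r _ => by ring)]
        rw [Finset.sum_add_distrib, Finset.sum_const, Finset.card_range, ← Finset.mul_sum,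
          nsmul_eq_mul, mul_inv_cancel₀ hNR.ne', hS]
        ring
      rw [harg] at key
      exact key
    have hintmono : ∫ ω, (∑ r ∈ Finset.range N, ((N:ℝ)⁻¹ • Real.log (1 + c * X r ω))) ∂(ℙ : Measure Ω)
        ≤ ∫ ω, Real.log (1 + c * S ω) ∂(ℙ : Measure Ω) := by
      refine integral_mono (integrable_finset_sum _ fun r _ => ((hlogXint r).smul ((N:ℝ)⁻¹))) hlogSint ?_
      exact hjensen
    have hval : ∫ ω, (∑ r ∈ Finset.range N, ((N:ℝ)⁻¹ • Real.log (1 + c * X r ω))) ∂(ℙ : Measure Ω)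
        = ∫ x, Real.log (1 + c * x) ∂expOneMeasure := by
      rw [integral_finset_sum (f := fun r ω => (N:ℝ)⁻¹ • Real.log (1 + c * X r ω)) _ (fun r _ => ((hlogXint r).smul ((N:ℝ)⁻¹)))]
      simp only [smul_eq_mul]
      rw [Finset.sum_congr rfl (fun r _ => by rw [integral_const_mul, hlogXval r]),
        Finset.sum_const, Finset.card_range, nsmul_eq_mul, ← mul_assoc,
        mul_inv_cancel₀ hNR.ne', one_mul]
    calc Real.exp (-1) * Real.log (1 + c) ≤ ∫ x, Real.log (1 + c * x) ∂expOneMeasure :=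
          expOne_log_lb c hc
      _ = _ := hval.symm
      _ ≤ _ := hintmono
  · -- upper bound via tangent line
    have hpt : ∀ ω, Real.log (1 + c * S ω)
        ≤ Real.log (1 + c) + (c / (1 + c)) * (S ω - 1) := by
      intro ω
      have hc1 : (0:ℝ) < 1 + c := by linarith
      have ht : (0:ℝ) < (1 + c * S ω) / (1 + c) := div_pos (h1S ω) hc1
      have := Real.log_le_sub_one_of_pos ht
      rw [Real.log_div (h1S ω).ne' hc1.ne'] at this
      have heq : (1 + c * S ω) / (1 + c) - 1 = (c / (1 + c)) * (S ω - 1) := by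
        field_simp; ring
      linarith [heq ▸ this]
    have hrhsint : Integrable (fun ω => Real.log (1 + c) + (c / (1 + c)) * (S ω - 1)) ℙ :=
      (integrable_const _).add (((hSint.sub (integrable_const 1)).const_mul _))
    calc ∫ ω, Real.log (1 + c * S ω) ∂(ℙ : Measure Ω)
        ≤ ∫ ω, (Real.log (1 + c) + (c / (1 + c)) * (S ω - 1)) ∂(ℙ : Measure Ω) :=
          integral_mono hlogSint hrhsint hpt
      _ = Real.log (1 + c) := by
          have e1 : Integrable (fun ω => c / (1 + c) * (S ω - 1)) ℙ :=
            (hSint.sub (integrable_const 1)).const_mul _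
          have e2 : Integrable (fun ω => S ω - 1) ℙ := hSint.sub (integrable_const 1)
          rw [integral_add (integrable_const _) e1, integral_const, integral_const_mul,
            integral_sub hSint (integrable_const 1), hSmean, integral_const]
          simp


set_option maxHeartbeats 1000000 in
/-- Coherent capacity scaling, bandwidth exponent `ε < 1`:
`B(N) · E[log(1 + P N G_N / B(N))] = Θ(N^ε log N)` where `B(N) = ⌈N^ε⌉` and
`G_N = (1/N) ∑_{r<N} |H r|²` with the `|H r|²` i.i.d. Exponential(1)
(i.e. `H r` i.i.d. standard complex Gaussian). -/
theorem stmt_3 {Ω : Type*} [MeasureSpace Ω] [IsProbabilityMeasure (ℙ : Measure Ω)]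
    (H : ℕ → Ω → ℂ)
    (hmeas : ∀ r, Measurable (H r))
    (hindep : iIndepFun (fun r ω => ‖H r ω‖ ^ 2) ℙ)
    (hdist : ∀ r, Measure.map (fun ω => ‖H r ω‖ ^ 2) ℙ = expOneMeasure)
    (P : ℝ) (hP : 0 < P) (ε : ℝ) (hε0 : 0 < ε) (hε1 : ε < 1)
    (B : ℕ → ℕ) (hB : ∀ N, B N = ⌈(N : ℝ) ^ ε⌉₊)
    (G : ℕ → Ω → ℝ)
    (hG : ∀ N ω, G N ω = (∑ r ∈ Finset.range N, ‖H r ω‖ ^ 2) / N) :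
    ∃ c₁ c₂ : ℝ, 0 < c₁ ∧ 0 < c₂ ∧ ∃ N₀ : ℕ, ∀ N > N₀,
      c₁ ≤ ((B N : ℝ) * ∫ ω, Real.log (1 + P * N * G N ω / (B N : ℝ)) ∂(ℙ : Measure Ω))
            / ((N : ℝ) ^ ε * Real.log N) ∧
      ((B N : ℝ) * ∫ ω, Real.log (1 + P * N * G N ω / (B N : ℝ)) ∂(ℙ : Measure Ω))
            / ((N : ℝ) ^ ε * Real.log N) ≤ c₂ := by
  have hε1' : (0:ℝ) < 1 - ε := by linarith
  set M : ℝ := (max 1 (2 / P)) ^ (2 / (1 - ε)) with hM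
  have hbase1 : (1:ℝ) ≤ max 1 (2 / P) := le_max_left _ _
  have hM1 : (1:ℝ) ≤ M := Real.one_le_rpow hbase1 (div_nonneg (by norm_num) hε1'.le)
  refine ⟨Real.exp (-1) * ((1 - ε) / 2), 2 * (Real.log (1 + P) + 1),
    mul_pos (Real.exp_pos _) (by linarith),
    by nlinarith [Real.log_nonneg (by linarith : (1:ℝ) ≤ 1 + P)], 3 + ⌈M⌉₊, fun N hN => ?_⟩
  -- basic facts about N
  have hN4 : 4 ≤ N := by omega
  have hN1 : 1 ≤ N := by omega
  have hNpos : (0:ℝ) < N := by have : 0 < N := by omega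
                               exact_mod_cast this
  have hNR1 : (1:ℝ) ≤ N := by exact_mod_cast hN1
  have hNR4 : (4:ℝ) ≤ N := by exact_mod_cast hN4
  have hNM : M ≤ (N:ℝ) := by
    have : ⌈M⌉₊ ≤ N := by omega
    exact (Nat.ceil_le.mp this)
  have hlogN : 0 < Real.log N := Real.log_pos (by linarith)
  have hlogN1 : 1 ≤ Real.log N := by
    rw [Real.le_log_iff_exp_le hNpos]
    have := Real.exp_one_lt_d9
    linarith
  -- facts about B N
  have hrpow1 : (1:ℝ) ≤ (N:ℝ) ^ ε := by
    calc (1:ℝ) = (1:ℝ) ^ ε := (Real.one_rpow ε).symm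
      _ ≤ (N:ℝ) ^ ε := Real.rpow_le_rpow zero_le_one hNR1 hε0.le
  have hrpow_pos : (0:ℝ) < (N:ℝ) ^ ε := by positivity
  have hBge : (N:ℝ) ^ ε ≤ (B N : ℝ) := by rw [hB]; exact Nat.le_ceil _
  have hBle : (B N : ℝ) ≤ 2 * (N:ℝ) ^ ε := by
    rw [hB]
    have := Nat.ceil_lt_add_one (by positivity : (0:ℝ) ≤ (N:ℝ) ^ ε)
    linarith
  have hBpos : (0:ℝ) < (B N : ℝ) := lt_of_lt_of_le (by linarith) hBge
  set c : ℝ := P * N / (B N : ℝ) with hc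
  have hcpos : 0 < c := by positivity
  -- apply the main estimate
  obtain ⟨hlow, hupp⟩ := main_est (fun r ω => ‖H r ω‖ ^ 2)
    (fun r => (continuous_norm.measurable.comp (hmeas r)).pow_const 2)
    (fun r ω => by positivity) hdist N hN1 c hcpos.le
  have hfun : (fun ω => Real.log (1 + P * N * G N ω / (B N : ℝ)))
      = fun ω => Real.log (1 + c * ((∑ r ∈ Finset.range N, ‖H r ω‖ ^ 2) / N)) :=
    funext fun ω => congrArg Real.log (by rw [hG N ω, hc]; ring)
  rw [hfun]
  set E : ℝ := ∫ ω, Real.log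
    (1 + c * ((∑ r ∈ Finset.range N, ‖H r ω‖ ^ 2) / N)) ∂(ℙ : Measure Ω) with hE
  have hlogc0 : 0 ≤ Real.log (1 + c) := Real.log_nonneg (by linarith)
  have hD : 0 < (N:ℝ) ^ ε * Real.log N := mul_pos hrpow_pos hlogN
  -- c lower bound
  have hNsplit : (N:ℝ) ^ ((1 - ε)/2) * (N:ℝ) ^ ((1 - ε)/2) = (N:ℝ) ^ (1 - ε) := by
    rw [← Real.rpow_add hNpos]; norm_num
  have ha0 : (0:ℝ) < (N:ℝ) ^ ((1 - ε)/2) := by positivity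
  have haM : 2 / P ≤ (N:ℝ) ^ ((1 - ε)/2) := by
    have h1 : M ^ ((1 - ε)/2) ≤ (N:ℝ) ^ ((1 - ε)/2) :=
      Real.rpow_le_rpow (by linarith) hNM (by positivity)
    have h2 : M ^ ((1 - ε)/2) = max 1 (2 / P) := by
      rw [hM, ← Real.rpow_mul (by linarith : (0:ℝ) ≤ max 1 (2/P))]
      rw [show 2 / (1 - ε) * ((1 - ε)/2) = 1 by field_simp, Real.rpow_one]
    calc 2 / P ≤ max 1 (2 / P) := le_max_right _ _
      _ = M ^ ((1 - ε)/2) := h2.symm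
      _ ≤ _ := h1
  have hclb : (N:ℝ) ^ ((1 - ε)/2) ≤ c := by
    have h1 : P * N / (2 * (N:ℝ) ^ ε) ≤ c := by
      rw [hc]; gcongr
    have h2 : P * N / (2 * (N:ℝ) ^ ε) = (P / 2) * (N:ℝ) ^ (1 - ε) := by
      rw [Real.rpow_sub hNpos, Real.rpow_one]
      field_simp
    have h3 : (N:ℝ) ^ ((1 - ε)/2) ≤ (P / 2) * (N:ℝ) ^ (1 - ε) := by
      rw [← hNsplit]
      have h2P : 2 ≤ (N:ℝ) ^ ((1 - ε)/2) * P := (div_le_iff₀ hP).mp haM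
      nlinarith [mul_le_mul_of_nonneg_left h2P ha0.le]
    linarith
  have hlogc_ge : (1 - ε)/2 * Real.log N ≤ Real.log (1 + c) := by
    rw [← Real.log_rpow hNpos]
    exact Real.log_le_log ha0 (by linarith)
  -- c upper bound
  have hcub : 1 + c ≤ (1 + P) * N := by
    have h1 : c ≤ P * N / (N:ℝ) ^ ε := by rw [hc]; gcongr
    have h2 : P * N / (N:ℝ) ^ ε = P * (N:ℝ) ^ (1 - ε) := by
      rw [Real.rpow_sub hNpos, Real.rpow_one]; ring
    have h3 : (N:ℝ) ^ (1 - ε) ≤ (N:ℝ) := by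
      calc (N:ℝ) ^ (1 - ε) ≤ (N:ℝ) ^ (1:ℝ) :=
            Real.rpow_le_rpow_of_exponent_le hNR1 (by linarith)
        _ = N := Real.rpow_one _
    nlinarith
  have hlogc_le : Real.log (1 + c) ≤ (Real.log (1 + P) + 1) * Real.log N := by
    have h1 : Real.log (1 + c) ≤ Real.log ((1 + P) * N) :=
      Real.log_le_log (by linarith) hcub
    rw [Real.log_mul (by linarith) (by linarith)] at h1
    have hlogP0 : 0 ≤ Real.log (1 + P) := Real.log_nonneg (by linarith)
    nlinarith
  constructor
  · rw [le_div_iff₀ hD]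
    have step1 : (B N : ℝ) * (Real.exp (-1) * Real.log (1 + c)) ≤ (B N : ℝ) * E :=
      mul_le_mul_of_nonneg_left hlow hBpos.le
    have step2 : (N:ℝ) ^ ε * ((1 - ε)/2 * Real.log N) ≤ (B N : ℝ) * Real.log (1 + c) :=
      mul_le_mul hBge hlogc_ge (mul_nonneg (by linarith) hlogN.le) hBpos.le
    have hexp : (0:ℝ) < Real.exp (-1) := Real.exp_pos _
    calc Real.exp (-1) * ((1 - ε) / 2) * ((N:ℝ) ^ ε * Real.log N)
        = Real.exp (-1) * ((N:ℝ) ^ ε * ((1 - ε)/2 * Real.log N)) := by ring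
      _ ≤ Real.exp (-1) * ((B N : ℝ) * Real.log (1 + c)) :=
          mul_le_mul_of_nonneg_left step2 hexp.le
      _ = (B N : ℝ) * (Real.exp (-1) * Real.log (1 + c)) := by ring
      _ ≤ (B N : ℝ) * E := step1
  · rw [div_le_iff₀ hD]
    have step1 : (B N : ℝ) * E ≤ (B N : ℝ) * Real.log (1 + c) :=
      mul_le_mul_of_nonneg_left hupp hBpos.le
    have step2 : (B N : ℝ) * Real.log (1 + c) ≤ 2 * (N:ℝ) ^ ε * ((Real.log (1 + P) + 1) * Real.log N) := by
      have := mul_le_mul hBle hlogc_le hlogc0 (by positivity : (0:ℝ) ≤ 2 * (N:ℝ) ^ ε)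
      linarith
    calc (B N : ℝ) * E ≤ 2 * (N:ℝ) ^ ε * ((Real.log (1 + P) + 1) * Real.log N) := by linarith
      _ = 2 * (Real.log (1 + P) + 1) * ((N:ℝ) ^ ε * Real.log N) := by ring
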